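/- arXiv:1802.07609 — 2 statements merged into one kernel-verified Lean document; each statement's English description precedes it below -/
import Mathlib

section
/- For every integer k ≥ 1, every real x ≥ 2 and every H > 0, one has S(x, H) ≤ 2 · (2/H)^{2k} · M_{2k}(x, H/2). -/
open scoped Classical

/-- The n-th prime (0-indexed: `nthPrime 0 = 2`). -/
noncomputable def nthPrime (n : ℕ) : ℕ := Nat.nth Nat.Prime n

/-- The indices n with p_{n+1} ≤ x and p_{n+1} - p_n ≥ H. -/
noncomputable def gapSet (x H : ℝ) : Finset ℕ :=
  (Finset.range ⌈x⌉₊).filter fun n =>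
    (nthPrime (n + 1) : ℝ) ≤ x ∧ H ≤ (nthPrime (n + 1) : ℝ) - nthPrime n

/-- S(x, H): the sum of gaps p_{n+1} - p_n over pairs with p_{n+1} ≤ x and gap ≥ H. -/
noncomputable def Sgap (x H : ℝ) : ℝ :=
  ∑ n ∈ gapSet x H, ((nthPrime (n + 1) : ℝ) - nthPrime n)

/-- The Chebyshev theta function θ(t) = Σ_{p ≤ t} log p. -/
noncomputable def chebTheta (t : ℝ) : ℝ :=
  ∑ p ∈ (Finset.range (⌊t⌋₊ + 1)).filter Nat.Prime, Real.log p

/-- The 2k-th moment M_{2k}(x, h) = ∫₁ˣ (θ(y+h) - θ(y) - h)^{2k} dy. -/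
noncomputable def Mmom (k : ℕ) (x h : ℝ) : ℝ :=
  ∫ y in (1:ℝ)..x, (chebTheta (y + h) - chebTheta y - h) ^ (2 * k)

private lemma primes_infinite : { p : ℕ | Nat.Prime p }.Infinite :=
  Nat.infinite_setOf_prime

private lemma nthPrime_prime (n : ℕ) : Nat.Prime (nthPrime n) :=
  Nat.nth_mem_of_infinite primes_infinite n

private lemma succ_nthPrime_le {n q : ℕ} (hq : Nat.Prime q) (h : nthPrime n < q) :
    nthPrime (n + 1) ≤ q := by
  have hq' : q = Nat.nth Nat.Prime (Nat.count Nat.Prime q) := (Nat.nth_count hq).symm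
  rw [hq'] at h ⊢
  exact (Nat.nth_le_nth primes_infinite).2 ((Nat.nth_lt_nth primes_infinite).1 h)

private lemma chebTheta_mono : Monotone chebTheta := by
  intro a b hab
  apply Finset.sum_le_sum_of_subset_of_nonneg
  · exact Finset.filter_subset_filter _ (Finset.range_subset_range.2 (by
      have := Nat.floor_mono hab; omega))
  · intro p hp _
    exact Real.log_nonneg (by exact_mod_cast (Finset.mem_filter.1 hp).2.one_lt.le)

private lemma chebTheta_nonneg (t : ℝ) : 0 ≤ chebTheta t :=
  Finset.sum_nonneg fun p hp =>
    Real.log_nonneg (by exact_mod_cast (Finset.mem_filter.1 hp).2.one_lt.le)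

/-- θ is constant between consecutive primes. -/
private lemma chebTheta_const {n : ℕ} {y t : ℝ}
    (hy : (nthPrime n : ℝ) ≤ y) (hyt : y ≤ t) (ht : t < nthPrime (n + 1)) :
    chebTheta t = chebTheta y := by
  have h0y : (0 : ℝ) ≤ y := le_trans (by positivity) hy
  have h0t : (0 : ℝ) ≤ t := h0y.trans hyt
  unfold chebTheta
  congr 1
  apply Finset.Subset.antisymm
  · intro p hp
    simp only [Finset.mem_filter, Finset.mem_range] at hp ⊢
    obtain ⟨hpr, hpp⟩ := hp
    refine ⟨?_, hpp⟩
    by_contra hcon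
    push_neg at hcon
    have hyp : y < p := (Nat.floor_lt h0y).1 (by omega)
    have hnp : nthPrime n < p := by exact_mod_cast lt_of_le_of_lt hy hyp
    have hle : nthPrime (n + 1) ≤ p := succ_nthPrime_le hpp hnp
    have hpt : (p : ℝ) ≤ t := by
      have : (p : ℝ) ≤ (⌊t⌋₊ : ℝ) := by exact_mod_cast Nat.lt_succ_iff.1 hpr
      exact this.trans (Nat.floor_le h0t)
    have : (nthPrime (n + 1) : ℝ) ≤ p := by exact_mod_cast hle
    linarith
  · exact Finset.filter_subset_filter _ (Finset.range_subset_range.2 (by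
      have := Nat.floor_mono hyt; omega))

/-- For every k ≥ 1, x ≥ 2, H > 0: S(x, H) ≤ 2 (2/H)^{2k} M_{2k}(x, H/2). -/
theorem Sgap_le_moment (k : ℕ) (hk : 1 ≤ k) (x H : ℝ) (hx : 2 ≤ x) (hH : 0 < H) :
    Sgap x H ≤ 2 * (2 / H) ^ (2 * k) * Mmom k x (H / 2) := by
  set c : ℝ := H / 2 with hc
  have hc0 : 0 < c := by positivity
  set F : ℝ → ℝ := fun y => (chebTheta (y + c) - chebTheta y - c) ^ (2 * k) with hFdef
  have hFnn : ∀ y, 0 ≤ F y := fun y => (even_two_mul k).pow_nonneg _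
  have hFmeas : Measurable F := by
    apply Measurable.pow_const
    exact (((chebTheta_mono.comp (monotone_id.add_const c)).measurable).sub
      chebTheta_mono.measurable).sub measurable_const
  -- F is integrable on (1, x]
  have hInt : MeasureTheory.IntegrableOn F (Set.Ioc 1 x) := by
    apply MeasureTheory.Measure.integrableOn_of_bounded
      (M := (chebTheta (x + c) + c) ^ (2 * k))
    · exact (measure_Ioc_lt_top).ne
    · exact hFmeas.aestronglyMeasurable
    · rw [MeasureTheory.ae_restrict_iff' measurableSet_Ioc]
      refine MeasureTheory.ae_of_all _ fun y hy => ?_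
      have h1 : chebTheta y ≤ chebTheta (x + c) := chebTheta_mono (by linarith [hy.2])
      have h2 : chebTheta (y + c) ≤ chebTheta (x + c) := chebTheta_mono (by linarith [hy.2])
      have h3 : 0 ≤ chebTheta y := chebTheta_nonneg y
      have h4 : 0 ≤ chebTheta (y + c) := chebTheta_nonneg _
      have habs : |chebTheta (y + c) - chebTheta y - c| ≤ chebTheta (x + c) + c := by
        rw [abs_le]; constructor <;> nlinarith [chebTheta_nonneg (x + c)]
      calc ‖F y‖ = |chebTheta (y + c) - chebTheta y - c| ^ (2 * k) := by
            rw [hFdef]; simp [Real.norm_eq_abs, abs_pow]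
        _ ≤ (chebTheta (x + c) + c) ^ (2 * k) :=
            pow_le_pow_left₀ (abs_nonneg _) habs _
  -- the prime-free intervals
  set I : ℕ → Set ℝ := fun n => Set.Ico (nthPrime n : ℝ) ((nthPrime (n + 1) : ℝ) - c)
    with hIdef
  have hmem : ∀ n ∈ gapSet x H,
      (nthPrime (n + 1) : ℝ) ≤ x ∧ H ≤ (nthPrime (n + 1) : ℝ) - nthPrime n := by
    intro n hn
    exact (Finset.mem_filter.1 hn).2
  have hsub : ∀ n ∈ gapSet x H, I n ⊆ Set.Ioc 1 x := by
    intro n hn y hy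
    obtain ⟨hnx, hgap⟩ := hmem n hn
    have h2 : (2 : ℝ) ≤ (nthPrime n : ℝ) := by exact_mod_cast (nthPrime_prime n).two_le
    exact ⟨by linarith [hy.1], by linarith [hy.2]⟩
  have hval : ∀ n ∈ gapSet x H, ∀ y ∈ I n, F y = c ^ (2 * k) := by
    intro n hn y hy
    have hconst : chebTheta (y + c) = chebTheta y :=
      chebTheta_const (n := n) hy.1 (by linarith) (by linarith [hy.2])
    rw [hFdef]
    simp only
    rw [hconst, show chebTheta y - chebTheta y - c = -c by ring, (even_two_mul k).neg_pow]
  have hintval : ∀ n ∈ gapSet x H,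
      ∫ y in I n, F y = ((nthPrime (n + 1) : ℝ) - c - nthPrime n) * c ^ (2 * k) := by
    intro n hn
    obtain ⟨hnx, hgap⟩ := hmem n hn
    rw [MeasureTheory.setIntegral_congr_fun measurableSet_Ico (hval n hn),
      MeasureTheory.setIntegral_const, Real.volume_real_Ico_of_le (by linarith), smul_eq_mul]
  -- disjointness
  have hdisj : ∀ m n : ℕ, m < n → Disjoint (I m) (I n) := by
    intro m n h
    rw [Set.disjoint_left]
    intro y hym hyn
    have hmn : nthPrime (m + 1) ≤ nthPrime n := (Nat.nth_le_nth primes_infinite).2 h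
    have hmn' : (nthPrime (m + 1) : ℝ) ≤ nthPrime n := by exact_mod_cast hmn
    have := hym.2
    have := hyn.1
    linarith
  have hpair : Set.Pairwise ↑(gapSet x H) (Function.onFun Disjoint I) := by
    intro m _ n _ hmn
    rcases hmn.lt_or_gt with h | h
    · exact hdisj m n h
    · exact (hdisj n m h).symm
  have hsum : ∫ y in ⋃ n ∈ gapSet x H, I n, F y = ∑ n ∈ gapSet x H, ∫ y in I n, F y :=
    MeasureTheory.integral_biUnion_finset _ (fun n _ => measurableSet_Ico) hpair
      (fun n hn => hInt.mono_set (hsub n hn))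
  have hle : ∫ y in ⋃ n ∈ gapSet x H, I n, F y ≤ ∫ y in Set.Ioc 1 x, F y :=
    MeasureTheory.setIntegral_mono_set hInt (MeasureTheory.ae_of_all _ hFnn)
      ((Set.iUnion₂_subset hsub).eventuallyLE)
  have hM : Mmom k x c = ∫ y in Set.Ioc 1 x, F y := by
    rw [Mmom, intervalIntegral.integral_of_le (by linarith)]
  -- put everything together
  have hA : (0 : ℝ) ≤ 2 * (2 / H) ^ (2 * k) := by positivity
  have hone : (2 / H) ^ (2 * k) * c ^ (2 * k) = 1 := by
    rw [← mul_pow, hc]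
    field_simp
    exact one_pow _
  calc Sgap x H = ∑ n ∈ gapSet x H, ((nthPrime (n + 1) : ℝ) - nthPrime n) := rfl
    _ ≤ ∑ n ∈ gapSet x H,
        2 * (2 / H) ^ (2 * k) * (((nthPrime (n + 1) : ℝ) - c - nthPrime n) * c ^ (2 * k)) := by
        apply Finset.sum_le_sum
        intro n hn
        obtain ⟨hnx, hgap⟩ := hmem n hn
        have heq : 2 * (2 / H) ^ (2 * k) *
            (((nthPrime (n + 1) : ℝ) - c - nthPrime n) * c ^ (2 * k))
            = 2 * ((nthPrime (n + 1) : ℝ) - c - nthPrime n) := by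
          linear_combination (2 * ((nthPrime (n + 1) : ℝ) - c - nthPrime n)) * hone
        rw [heq]
        linarith
    _ = 2 * (2 / H) ^ (2 * k) * ∑ n ∈ gapSet x H,
        (((nthPrime (n + 1) : ℝ) - c - nthPrime n) * c ^ (2 * k)) := by
        rw [Finset.mul_sum]
    _ = 2 * (2 / H) ^ (2 * k) * ∑ n ∈ gapSet x H, ∫ y in I n, F y := by
        congr 1
        exact (Finset.sum_congr rfl hintval).symm
    _ ≤ 2 * (2 / H) ^ (2 * k) * Mmom k x (H / 2) := by
        apply mul_le_mul_of_nonneg_left _ hA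
        rw [← hc, hM, ← hsum]
        exact hle
end

section
/- The pair singular series satisfies Σ_{d ≤ h} 𝔖(d) ~ h as h → ∞, i.e., (1/h) Σ_{1 ≤ d ≤ h} 𝔖(d) → 1. -/
open scoped Classical

/-- The twin prime constant C₂ = ∏_{p > 2} (1 - 1/(p-1)²). -/
noncomputable def twinPrimeConst : ℝ :=
  ∏' p : Nat.Primes, if 2 < (p : ℕ) then 1 - 1 / (((p : ℕ) : ℝ) - 1) ^ 2 else 1

/-- The pair singular series 𝔖(d): for even d, 2 C₂ ∏_{p ∣ d, p > 2} (p-1)/(p-2);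
for odd d, 0. -/
noncomputable def pairSingularSeries (d : ℕ) : ℝ :=
  if Even d then
    2 * twinPrimeConst *
      ∏ p ∈ d.primeFactors.filter (fun p => 2 < p),
        (((p : ℝ) - 1) / ((p : ℝ) - 2))
  else 0

open Finset Filter

/-! ### Auxiliary multiplicative functions -/

/-- `gAux q = ∏_{p ∣ q} 1/(p-2)` for `q` odd squarefree, else `0`. -/
noncomputable def gAux (q : ℕ) : ℝ :=
  if Squarefree q ∧ Odd q then ∏ p ∈ q.primeFactors, (1 / ((p : ℝ) - 2)) else 0

/-- `fAux q = ∏_{p ∣ q} 1/(p(p-2))` for `q` odd squarefree, else `0`. -/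
noncomputable def fAux (q : ℕ) : ℝ :=
  if Squarefree q ∧ Odd q then ∏ p ∈ q.primeFactors, (1 / ((p : ℝ) * ((p : ℝ) - 2))) else 0

lemma three_le_of_mem_primeFactors_of_odd {q p : ℕ} (hq : Odd q) (hp : p ∈ q.primeFactors) :
    3 ≤ p := by
  have hpp := Nat.prime_of_mem_primeFactors hp
  have hdvd := Nat.dvd_of_mem_primeFactors hp
  rcases hpp.eq_two_or_odd' with h2 | hodd
  · subst h2
    rw [Nat.odd_iff] at hq
    obtain ⟨c, hc⟩ := hdvd
    omega
  · have := hpp.two_le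
    rcases hodd with ⟨k, hk⟩
    omega

lemma gAux_nonneg (q : ℕ) : 0 ≤ gAux q := by
  unfold gAux
  split_ifs with h
  · refine Finset.prod_nonneg fun p hp => ?_
    have h3 := three_le_of_mem_primeFactors_of_odd h.2 hp
    have h3' : (3 : ℝ) ≤ (p : ℝ) := by exact_mod_cast h3
    exact div_nonneg zero_le_one (by linarith)
  · exact le_refl 0

lemma fAux_nonneg (q : ℕ) : 0 ≤ fAux q := by
  unfold fAux
  split_ifs with h
  · refine Finset.prod_nonneg fun p hp => ?_
    have h3 := three_le_of_mem_primeFactors_of_odd h.2 hp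
    have h3' : (3 : ℝ) ≤ (p : ℝ) := by exact_mod_cast h3
    exact div_nonneg zero_le_one (by nlinarith)
  · exact le_refl 0

lemma fAux_zero : fAux 0 = 0 := by
  simp [fAux, not_squarefree_zero]

lemma fAux_one : fAux 1 = 1 := by
  simp [fAux, squarefree_one, odd_one]

/-- Auxiliary comparison factor. -/
noncomputable def cAux (p : ℕ) : ℝ := ((p : ℝ) ^ ((3:ℝ)/2)) / ((p : ℝ) * ((p : ℝ) - 2))

lemma rpow_three_half {x : ℝ} (hx : 0 < x) : x ^ ((3:ℝ)/2) = x * Real.sqrt x := by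
  rw [show ((3:ℝ)/2) = 1 + 1/2 by norm_num, Real.rpow_add hx, Real.rpow_one,
    ← Real.sqrt_eq_rpow]

lemma cAux_nonneg {p : ℕ} (h3 : 3 ≤ p) : 0 ≤ cAux p := by
  have h3' : (3 : ℝ) ≤ (p : ℝ) := by exact_mod_cast h3
  unfold cAux
  have h0 : (0:ℝ) ≤ (p : ℝ) ^ ((3:ℝ)/2) := Real.rpow_nonneg (by linarith) _
  have h1 : (0:ℝ) ≤ (p : ℝ) * ((p : ℝ) - 2) := by nlinarith
  exact div_nonneg h0 h1

lemma cAux_le_two {p : ℕ} (h3 : p = 3) : cAux p ≤ 2 := by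
  subst h3
  unfold cAux
  have hc : (((3:ℕ) : ℝ)) = (3:ℝ) := by norm_num
  rw [hc, rpow_three_half (by norm_num : (0:ℝ) < 3)]
  have hs : Real.sqrt (3 : ℝ) ≤ 2 := by
    nlinarith [Real.sq_sqrt (show (0:ℝ) ≤ (3:ℝ) by norm_num), Real.sqrt_nonneg ((3:ℝ))]
  rw [div_le_iff₀ (by norm_num)]
  nlinarith [Real.sqrt_nonneg ((3:ℝ))]

lemma cAux_le_one {p : ℕ} (h5 : 5 ≤ p) : cAux p ≤ 1 := by
  have h5' : (5 : ℝ) ≤ (p : ℝ) := by exact_mod_cast h5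
  unfold cAux
  have hx : (0:ℝ) < (p : ℝ) := by linarith
  rw [rpow_three_half hx, div_le_one (by nlinarith)]
  have h1 : Real.sqrt (p : ℝ) ≤ (p : ℝ) - 2 := by
    nlinarith [Real.sq_sqrt (show (0:ℝ) ≤ (p:ℝ) by linarith), Real.sqrt_nonneg ((p:ℝ))]
  nlinarith [Real.sqrt_nonneg ((p:ℝ))]

lemma prod_cAux_le {F : Finset ℕ} (hF : ∀ p ∈ F, 3 ≤ p) (hFp : ∀ p ∈ F, p.Prime) :
    ∏ p ∈ F, cAux p ≤ 2 := by
  rw [← Finset.prod_filter_mul_prod_filter_not F (· = 3)]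
  have h1 : ∏ p ∈ F.filter (· = 3), cAux p ≤ 2 := by
    rw [Finset.filter_eq']
    split_ifs
    · rw [Finset.prod_singleton]; exact cAux_le_two rfl
    · rw [Finset.prod_empty]; norm_num
  have h2 : ∏ p ∈ F.filter (fun p => ¬ p = 3), cAux p ≤ 1 := by
    refine Finset.prod_le_one (fun p hp => ?_) (fun p hp => ?_)
    · rcases Finset.mem_filter.mp hp with ⟨hpF, -⟩
      exact cAux_nonneg (hF p hpF)
    · rcases Finset.mem_filter.mp hp with ⟨hpF, hne⟩
      have h3 := hF p hpF
      have hprime := hFp p hpF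
      have h4 : p ≠ 4 := by rintro rfl; norm_num at hprime
      exact cAux_le_one (by omega)
  have h1n : (0:ℝ) ≤ ∏ p ∈ F.filter (· = 3), cAux p := by
    refine Finset.prod_nonneg fun p hp => cAux_nonneg (hF p (Finset.mem_filter.mp hp).1)
  have h2n : (0:ℝ) ≤ ∏ p ∈ F.filter (fun p => ¬ p = 3), cAux p := by
    refine Finset.prod_nonneg fun p hp => cAux_nonneg (hF p (Finset.mem_filter.mp hp).1)
  calc (∏ p ∈ F.filter (· = 3), cAux p) * ∏ p ∈ F.filter (fun p => ¬ p = 3), cAux p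
      ≤ 2 * 1 := mul_le_mul h1 h2 h2n (by norm_num)
    _ = 2 := by norm_num

lemma fAux_eq_gAux_div {q : ℕ} (hq : q ≠ 0) : fAux q = gAux q / q := by
  unfold fAux gAux
  split_ifs with h
  · have hq' : ((q : ℝ)) = ∏ p ∈ q.primeFactors, (p : ℝ) := by
      rw [← Nat.cast_prod, Nat.prod_primeFactors_of_squarefree h.1]
    rw [hq', ← Finset.prod_div_distrib]
    refine Finset.prod_congr rfl fun p _ => ?_
    rw [div_div, mul_comm]
  · simp

lemma fAux_le (q : ℕ) : fAux q ≤ 2 * (((q : ℝ) ^ ((3:ℝ)/2))⁻¹) := by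
  by_cases h : Squarefree q ∧ Odd q
  · have hF3 : ∀ p ∈ q.primeFactors, 3 ≤ p :=
      fun p hp => three_le_of_mem_primeFactors_of_odd h.2 hp
    have hFp : ∀ p ∈ q.primeFactors, p.Prime := fun p hp => Nat.prime_of_mem_primeFactors hp
    unfold fAux
    rw [if_pos h]
    have hstep : ∀ p ∈ q.primeFactors,
        (1 : ℝ) / ((p : ℝ) * ((p : ℝ) - 2)) = cAux p * (((p : ℝ) ^ ((3:ℝ)/2))⁻¹) := by
      intro p hp
      have h3 : (3 : ℝ) ≤ (p : ℝ) := by exact_mod_cast hF3 p hp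
      have hppos : (0:ℝ) < (p : ℝ) := by linarith
      have hy : (p : ℝ) ^ ((3:ℝ)/2) ≠ 0 := ne_of_gt (Real.rpow_pos_of_pos hppos _)
      have hz : (p : ℝ) * ((p : ℝ) - 2) ≠ 0 := by nlinarith
      unfold cAux
      field_simp
    rw [Finset.prod_congr rfl hstep, Finset.prod_mul_distrib]
    have hprodinv : ∏ p ∈ q.primeFactors, ((p : ℝ) ^ ((3:ℝ)/2))⁻¹ =
        (((q : ℝ)) ^ ((3:ℝ)/2))⁻¹ := by
      rw [Finset.prod_inv_distrib, Real.finset_prod_rpow _ _ (fun p _ => by positivity) _,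
        ← Nat.cast_prod, Nat.prod_primeFactors_of_squarefree h.1]
    rw [hprodinv]
    refine mul_le_mul_of_nonneg_right (prod_cAux_le hF3 hFp) (inv_nonneg.mpr ?_)
    exact Real.rpow_nonneg (Nat.cast_nonneg q) _
  · unfold fAux
    rw [if_neg h]
    have : (0:ℝ) ≤ ((q : ℝ) ^ ((3:ℝ)/2))⁻¹ := inv_nonneg.mpr (Real.rpow_nonneg (Nat.cast_nonneg q) _)
    linarith

lemma summable_fAux : Summable fAux := by
  refine Summable.of_nonneg_of_le fAux_nonneg fAux_le ?_
  exact (Real.summable_nat_rpow_inv.mpr (by norm_num)).mul_left 2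

lemma fAux_mul {m n : ℕ} (h : Nat.Coprime m n) : fAux (m * n) = fAux m * fAux n := by
  by_cases hmn : Squarefree (m * n) ∧ Odd (m * n)
  · have hsq := (Nat.squarefree_mul h).mp hmn.1
    have hodd := Nat.odd_mul.mp hmn.2
    have hm : Squarefree m ∧ Odd m := ⟨hsq.1, hodd.1⟩
    have hn : Squarefree n ∧ Odd n := ⟨hsq.2, hodd.2⟩
    unfold fAux
    rw [if_pos hmn, if_pos hm, if_pos hn,
      Nat.primeFactors_mul hm.1.ne_zero hn.1.ne_zero,
      Finset.prod_union h.disjoint_primeFactors]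
  · have hiff : ¬((Squarefree m ∧ Odd m) ∧ (Squarefree n ∧ Odd n)) := by
      rw [Nat.squarefree_mul h, Nat.odd_mul] at hmn
      tauto
    unfold fAux
    rw [if_neg hmn]
    by_cases hm : Squarefree m ∧ Odd m
    · rw [if_pos hm, if_neg (fun hn => hiff ⟨hm, hn⟩), mul_zero]
    · rw [if_neg hm, zero_mul]

lemma tsum_fAux_pow (p : ℕ) (hp : p.Prime) :
    ∑' e, fAux (p ^ e) =
      if 2 < p then 1 + 1 / ((p : ℝ) * ((p : ℝ) - 2)) else 1 := by
  have h0 : ∀ e ∉ ({0, 1} : Finset ℕ), fAux (p ^ e) = 0 := by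
    intro e he
    simp only [Finset.mem_insert, Finset.mem_singleton] at he
    have h2 : 2 ≤ e := by omega
    unfold fAux
    rw [if_neg]
    rintro ⟨hsq, -⟩
    have hdvd : p * p ∣ p ^ e := by
      calc p * p = p ^ 2 := (sq p).symm
      _ ∣ p ^ e := pow_dvd_pow p h2
    have := Nat.isUnit_iff.mp (hsq p hdvd)
    have := hp.one_lt
    omega
  rw [tsum_eq_sum h0, Finset.sum_insert (by norm_num), Finset.sum_singleton, pow_zero,
    pow_one, fAux_one]
  by_cases h2 : 2 < p
  · rw [if_pos h2]
    congr 1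
    have hodd : Odd p := hp.odd_of_ne_two (by omega)
    unfold fAux
    rw [if_pos ⟨hp.prime.squarefree, hodd⟩, hp.primeFactors, Finset.prod_singleton]
  · rw [if_neg h2]
    have hp2 : p = 2 := by have := hp.two_le; omega
    subst hp2
    unfold fAux
    rw [if_neg (fun hc => absurd hc.2 (by decide))]
    ring

/-- The sum of `fAux`. -/
noncomputable def Bsum : ℝ := ∑' n, fAux n

lemma one_le_Bsum : 1 ≤ Bsum := by
  have h := Summable.le_tsum summable_fAux 1 (fun j _ => fAux_nonneg j)
  rwa [fAux_one] at h

lemma hasProd_Bsum :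
    HasProd (fun p : Nat.Primes =>
      if 2 < (p : ℕ) then 1 + 1 / (((p : ℕ) : ℝ) * (((p : ℕ) : ℝ) - 2)) else 1) Bsum := by
  have hnorm : Summable (fun n => ‖fAux n‖) :=
    summable_fAux.congr fun n => (Real.norm_of_nonneg (fAux_nonneg n)).symm
  have h := EulerProduct.eulerProduct_hasProd fAux_one (fun {m n} hc => fAux_mul hc)
    hnorm fAux_zero
  have hfun : (fun p : Nat.Primes => ∑' e, fAux ((p : ℕ) ^ e)) =
      fun p : Nat.Primes =>
        if 2 < (p : ℕ) then 1 + 1 / (((p : ℕ) : ℝ) * (((p : ℕ) : ℝ) - 2)) else 1 :=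
    funext fun p => tsum_fAux_pow p p.prop
  rw [← hfun]
  exact h

lemma squarefree_prod_primes {t : Finset ℕ} (h : ∀ p ∈ t, p.Prime) :
    Squarefree (∏ p ∈ t, p) := by
  induction t using Finset.cons_induction with
  | empty => simpa using squarefree_one
  | cons a t ha ih =>
    rw [Finset.prod_cons]
    have hap : a.Prime := h a (Finset.mem_cons_self a t)
    have hcop : Nat.Coprime a (∏ p ∈ t, p) := by
      refine Nat.Coprime.prod_right fun q hq => ?_
      exact (Nat.coprime_primes hap (h q (Finset.mem_cons_of_mem hq))).mpr
        (by rintro rfl; exact ha hq)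
    exact (Nat.squarefree_mul hcop).mpr
      ⟨hap.prime.squarefree, ih fun p hp => h p (Finset.mem_cons_of_mem hp)⟩

lemma odd_prod_primes {t : Finset ℕ} (h : ∀ p ∈ t, p.Prime ∧ 2 < p) :
    Odd (∏ p ∈ t, p) := by
  rw [← Nat.not_even_iff_odd, even_iff_two_dvd]
  intro hdvd
  rcases (Nat.prime_two.prime.dvd_finset_prod_iff _).mp hdvd with ⟨p, hpt, hp2⟩
  have h2 := (Nat.prime_dvd_prime_iff_eq Nat.prime_two (h p hpt).1).mp hp2
  have := (h p hpt).2
  omega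

/-- squarefree-divisor expansion of the singular series product. -/
lemma key1 {d : ℕ} (hd : d ≠ 0) :
    ∏ p ∈ d.primeFactors.filter (fun p => 2 < p), (((p : ℝ) - 1) / ((p : ℝ) - 2)) =
      ∑ q ∈ d.divisors.filter (fun q => Squarefree q ∧ Odd q),
        ∏ p ∈ q.primeFactors, (1 / ((p : ℝ) - 2)) := by
  set s := d.primeFactors.filter (fun p => 2 < p) with hs
  have hmem : ∀ p ∈ s, p.Prime ∧ 2 < p ∧ p ∣ d := by
    intro p hp
    rcases Finset.mem_filter.mp hp with ⟨hp1, hp2⟩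
    exact ⟨Nat.prime_of_mem_primeFactors hp1, hp2, Nat.dvd_of_mem_primeFactors hp1⟩
  have step1 : ∏ p ∈ s, (((p : ℝ) - 1) / ((p : ℝ) - 2)) =
      ∏ p ∈ s, ((1 : ℝ) / ((p : ℝ) - 2) + 1) := by
    refine Finset.prod_congr rfl fun p hp => ?_
    have h3 : (3 : ℝ) ≤ (p : ℝ) := by exact_mod_cast (hmem p hp).2.1
    have h2 : ((p : ℝ) - 2) ≠ 0 := by linarith
    field_simp
    ring
  rw [step1, Finset.prod_add]
  simp only [Finset.prod_const_one, mul_one]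
  refine Finset.sum_nbij' (fun t => ∏ p ∈ t, p) (fun q => q.primeFactors) ?_ ?_ ?_ ?_ ?_
  · -- maps into divisors
    intro t ht
    have htsub := Finset.mem_powerset.mp ht
    have htp : ∀ p ∈ t, p.Prime := fun p hp => (hmem p (htsub hp)).1
    refine Finset.mem_filter.mpr ⟨Nat.mem_divisors.mpr ⟨?_, hd⟩, squarefree_prod_primes htp,
      odd_prod_primes fun p hp => ⟨(hmem p (htsub hp)).1, (hmem p (htsub hp)).2.1⟩⟩
    calc (∏ p ∈ t, p) ∣ ∏ p ∈ d.primeFactors, p :=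
          Finset.prod_dvd_prod_of_subset _ _ _ (htsub.trans (Finset.filter_subset _ _))
      _ ∣ d := Nat.prod_primeFactors_dvd d
  · -- inverse maps into powerset
    intro q hq
    rcases Finset.mem_filter.mp hq with ⟨hqd, hsq, hodd⟩
    rcases Nat.mem_divisors.mp hqd with ⟨hqdvd, -⟩
    refine Finset.mem_powerset.mpr fun p hp => ?_
    have hpp := Nat.prime_of_mem_primeFactors hp
    have h3 := three_le_of_mem_primeFactors_of_odd hodd hp
    refine Finset.mem_filter.mpr ⟨Nat.mem_primeFactors.mpr
      ⟨hpp, (Nat.dvd_of_mem_primeFactors hp).trans hqdvd, hd⟩, by omega⟩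
  · intro t ht
    exact Nat.primeFactors_prod fun p hp => (hmem p (Finset.mem_powerset.mp ht hp)).1
  · intro q hq
    exact Nat.prod_primeFactors_of_squarefree (Finset.mem_filter.mp hq).2.1
  · intro t ht
    rw [Nat.primeFactors_prod fun p hp => (hmem p (Finset.mem_powerset.mp ht hp)).1]

lemma twinPrimeConst_eq : twinPrimeConst = Bsum⁻¹ := by
  have hB : Bsum ≠ 0 := by linarith [one_le_Bsum]
  have h2 : HasProd (fun p : Nat.Primes =>
      (if 2 < (p : ℕ) then 1 + 1 / (((p : ℕ) : ℝ) * (((p : ℕ) : ℝ) - 2)) else 1)⁻¹)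
      Bsum⁻¹ := by
    have ht := Filter.Tendsto.inv₀ hasProd_Bsum hB
    unfold HasProd
    simpa only [← Finset.prod_inv_distrib] using ht
  have hfun : ∀ p : Nat.Primes,
      (if 2 < (p : ℕ) then 1 - 1 / (((p : ℕ) : ℝ) - 1) ^ 2 else 1) =
      (if 2 < (p : ℕ) then 1 + 1 / (((p : ℕ) : ℝ) * (((p : ℕ) : ℝ) - 2)) else 1)⁻¹ := by
    intro p
    by_cases hp2 : 2 < (p : ℕ)
    · rw [if_pos hp2, if_pos hp2]
      have h3 : (3 : ℝ) ≤ ((p : ℕ) : ℝ) := by exact_mod_cast hp2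
      set x := ((p : ℕ) : ℝ) with hx
      have hx1 : x - 1 ≠ 0 := by linarith
      have hx2 : x - 2 ≠ 0 := by linarith
      have hx0 : x ≠ 0 := by linarith
      refine eq_inv_of_mul_eq_one_left ?_
      field_simp
      ring
    · simp [hp2]
  calc twinPrimeConst
      = ∏' p : Nat.Primes,
        (if 2 < (p : ℕ) then 1 + 1 / (((p : ℕ) : ℝ) * (((p : ℕ) : ℝ) - 2)) else 1)⁻¹ :=
        tprod_congr hfun
    _ = Bsum⁻¹ := h2.tprod_eq

lemma key2 (h : ℕ) :
    ∑ d ∈ Finset.Icc 1 h, pairSingularSeries d =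
      2 * twinPrimeConst * ∑ q ∈ Finset.Icc 1 h, gAux q * ((h / (2 * q) : ℕ) : ℝ) := by
  have hd_eq : ∀ d ∈ Finset.Icc 1 h, pairSingularSeries d = 2 * twinPrimeConst *
      ∑ q ∈ Finset.Icc 1 h, (if 2 * q ∣ d ∧ Squarefree q ∧ Odd q then
        ∏ p ∈ q.primeFactors, (1 / ((p : ℝ) - 2)) else 0) := by
    intro d hd
    rcases Finset.mem_Icc.mp hd with ⟨hd1, hdh⟩
    by_cases hev : Even d
    · unfold pairSingularSeries
      rw [if_pos hev]
      have hset : (Finset.Icc 1 h).filter (fun q => 2 * q ∣ d ∧ Squarefree q ∧ Odd q) =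
          d.divisors.filter (fun q => Squarefree q ∧ Odd q) := by
        ext q
        simp only [Finset.mem_filter, Finset.mem_Icc, Nat.mem_divisors]
        constructor
        · rintro ⟨⟨hq1, hqh⟩, hdvd, hsq, hodd⟩
          exact ⟨⟨dvd_trans (dvd_mul_left q 2) hdvd, by omega⟩, hsq, hodd⟩
        · rintro ⟨⟨hqdvd, hd0⟩, hsq, hodd⟩
          have hq0 : q ≠ 0 := by rintro rfl; exact hd0 (Nat.eq_zero_of_zero_dvd hqdvd)
          have h2d : 2 ∣ d := hev.two_dvd
          have h2q : Nat.Coprime 2 q := hodd.coprime_two_left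
          exact ⟨⟨Nat.pos_of_ne_zero hq0,
            le_trans (Nat.le_of_dvd (by omega) hqdvd) hdh⟩,
            Nat.Coprime.mul_dvd_of_dvd_of_dvd h2q h2d hqdvd, hsq, hodd⟩
      rw [key1 (by omega : d ≠ 0), ← hset, Finset.sum_filter]
    · unfold pairSingularSeries
      rw [if_neg hev]
      have hzero : ∀ q ∈ Finset.Icc 1 h, (if 2 * q ∣ d ∧ Squarefree q ∧ Odd q then
          ∏ p ∈ q.primeFactors, (1 / ((p : ℝ) - 2)) else 0) = 0 := by
        intro q hq
        rw [if_neg]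
        rintro ⟨hdvd, -⟩
        exact hev (even_iff_two_dvd.mpr (dvd_trans (dvd_mul_right 2 q) hdvd))
      rw [Finset.sum_congr rfl hzero, Finset.sum_const_zero, mul_zero]
  rw [Finset.sum_congr rfl hd_eq, ← Finset.mul_sum, Finset.sum_comm]
  congr 1
  refine Finset.sum_congr rfl fun q hq => ?_
  by_cases hP : Squarefree q ∧ Odd q
  · have hite : ∀ d ∈ Finset.Icc 1 h, (if 2 * q ∣ d ∧ Squarefree q ∧ Odd q then
        ∏ p ∈ q.primeFactors, (1 / ((p : ℝ) - 2)) else 0) =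
        if 2 * q ∣ d then ∏ p ∈ q.primeFactors, (1 / ((p : ℝ) - 2)) else 0 := by
      intro d hd
      by_cases hdv : 2 * q ∣ d <;> simp [hdv, hP]
    rw [Finset.sum_congr rfl hite, ← Finset.sum_filter, Finset.sum_const]
    have hIcc : Finset.Icc 1 h = Finset.Ioc 0 h := rfl
    rw [hIcc, Nat.Ioc_filter_dvd_card_eq_div, nsmul_eq_mul]
    unfold gAux
    rw [if_pos hP, mul_comm]
  · have hzero : ∀ d ∈ Finset.Icc 1 h, (if 2 * q ∣ d ∧ Squarefree q ∧ Odd q then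
        ∏ p ∈ q.primeFactors, (1 / ((p : ℝ) - 2)) else 0) = 0 := by
      intro d hd
      rw [if_neg]
      rintro ⟨-, hrest⟩
      exact hP hrest
    rw [Finset.sum_congr rfl hzero, Finset.sum_const_zero]
    unfold gAux
    rw [if_neg hP, zero_mul]

lemma key3 (h : ℕ) :
    ∑ q ∈ Finset.Icc 1 h, gAux q * ((h / (2 * q) : ℕ) : ℝ) =
      ∑' q : ℕ, gAux q * ((h / (2 * q) : ℕ) : ℝ) := by
  symm
  refine tsum_eq_sum ?_
  intro q hq
  rw [Finset.mem_Icc] at hq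
  push_neg at hq
  rcases Nat.eq_zero_or_pos q with rfl | hq1
  · simp [gAux, not_squarefree_zero]
  · have hlt : h < q := hq hq1
    have hz : h / (2 * q) = 0 := Nat.div_eq_of_lt (by omega)
    rw [hz]
    simp

lemma tendsto_nat_div_cast (k : ℕ) (hk : 0 < k) :
    Tendsto (fun h : ℕ => ((h / k : ℕ) : ℝ) / h) atTop (nhds (1 / k)) := by
  have hk' : (0 : ℝ) < (k : ℝ) := by exact_mod_cast hk
  have hmodtendsto : Tendsto (fun h : ℕ => ((h % k : ℕ) : ℝ) / ((k : ℝ) * h)) atTop (nhds 0) := by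
    refine squeeze_zero' (Filter.Eventually.of_forall fun h => ?_)
      ?_ tendsto_one_div_atTop_nhds_zero_nat
    · exact div_nonneg (Nat.cast_nonneg _) (by positivity)
    · filter_upwards [Filter.eventually_ge_atTop 1] with h hh
      have hh' : (0 : ℝ) < (h : ℝ) := by exact_mod_cast hh
      have hle : ((h % k : ℕ) : ℝ) ≤ (k : ℝ) := by
        exact_mod_cast le_of_lt (Nat.mod_lt h hk)
      have hkk : (k : ℝ) / ((k : ℝ) * h) = 1 / (h : ℝ) := by
        rw [← mul_div_mul_left (1 : ℝ) ((h : ℝ)) (ne_of_gt hk'), mul_one]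
      rw [← hkk]
      exact div_le_div_of_nonneg_right hle (by positivity)
  have heq : (fun h : ℕ => 1 / (k : ℝ) - ((h % k : ℕ) : ℝ) / ((k : ℝ) * h)) =ᶠ[atTop]
      (fun h : ℕ => ((h / k : ℕ) : ℝ) / h) := by
    filter_upwards [Filter.eventually_ge_atTop 1] with h hh
    have hh' : (0 : ℝ) < (h : ℝ) := by exact_mod_cast hh
    have hmod : (k : ℝ) * ((h / k : ℕ) : ℝ) + ((h % k : ℕ) : ℝ) = (h : ℝ) := by
      exact_mod_cast Nat.div_add_mod h k
    field_simp
    linear_combination (-1 : ℝ) * hmod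
  have h3 : Tendsto (fun h : ℕ => 1 / (k : ℝ) - ((h % k : ℕ) : ℝ) / ((k : ℝ) * h)) atTop
      (nhds (1 / k - 0)) := tendsto_const_nhds.sub hmodtendsto
  rw [sub_zero] at h3
  exact Filter.Tendsto.congr' heq h3

lemma main_tendsto :
    Tendsto (fun h : ℕ => ∑' q : ℕ, gAux q * ((h / (2 * q) : ℕ) : ℝ) / h) atTop
      (nhds (Bsum / 2)) := by
  have hBs : (Bsum / 2 : ℝ) = ∑' q : ℕ, fAux q / 2 := tsum_div_const.symm
  rw [hBs]
  refine tendsto_tsum_of_dominated_convergence (bound := fun q => fAux q / 2)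
    (summable_fAux.div_const 2) ?_ ?_
  · intro q
    by_cases hP : Squarefree q ∧ Odd q
    · have hq0 : q ≠ 0 := hP.1.ne_zero
      have h2q : 0 < 2 * q := by omega
      have hq' : (0 : ℝ) < (q : ℝ) := by exact_mod_cast Nat.pos_of_ne_zero hq0
      have hlim := (tendsto_nat_div_cast (2 * q) h2q).const_mul (gAux q)
      have hval : gAux q * (1 / ((2 * q : ℕ) : ℝ)) = fAux q / 2 := by
        rw [fAux_eq_gAux_div hq0]
        push_cast
        rw [mul_one_div, div_div, mul_comm (2 : ℝ)]
      rw [hval] at hlim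
      refine hlim.congr fun h => ?_
      rw [mul_div_assoc]
    · have hg : gAux q = 0 := by unfold gAux; rw [if_neg hP]
      have hf : fAux q = 0 := by unfold fAux; rw [if_neg hP]
      simp only [hg, hf, zero_mul, zero_div]
      exact tendsto_const_nhds
  · refine Filter.Eventually.of_forall fun h q => ?_
    show ‖gAux q * ((h / (2 * q) : ℕ) : ℝ) / (h : ℝ)‖ ≤ fAux q / 2
    by_cases hP : Squarefree q ∧ Odd q
    · have hq0 : q ≠ 0 := hP.1.ne_zero
      have hg0 := gAux_nonneg q
      have hterm : (0 : ℝ) ≤ gAux q * ((h / (2 * q) : ℕ) : ℝ) / h :=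
        div_nonneg (mul_nonneg hg0 (Nat.cast_nonneg _)) (Nat.cast_nonneg _)
      rw [Real.norm_of_nonneg hterm]
      have hfg : fAux q / 2 = gAux q / (2 * (q : ℝ)) := by
        rw [fAux_eq_gAux_div hq0, div_div, mul_comm ((q : ℝ)) (2 : ℝ)]
      rw [hfg]
      rcases Nat.eq_zero_or_pos h with rfl | hpos
      · simp only [Nat.cast_zero, div_zero]
        positivity
      · have hh' : (0 : ℝ) < (h : ℝ) := by exact_mod_cast hpos
        have hq' : (0 : ℝ) < (q : ℝ) := by exact_mod_cast Nat.pos_of_ne_zero hq0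
        have hcd : ((h / (2 * q) : ℕ) : ℝ) ≤ (h : ℝ) / ((2 * q : ℕ) : ℝ) := Nat.cast_div_le
        calc gAux q * ((h / (2 * q) : ℕ) : ℝ) / h
            ≤ gAux q * ((h : ℝ) / ((2 * q : ℕ) : ℝ)) / h := by gcongr
          _ = gAux q / (2 * (q : ℝ)) := by
              push_cast
              rw [mul_div_assoc, div_div, mul_comm (2 * (q : ℝ)) ((h : ℝ)), ← div_div,
                div_self (ne_of_gt hh'), mul_one_div]
    · have hg : gAux q = 0 := by unfold gAux; rw [if_neg hP]
      simp only [hg, zero_mul, zero_div, norm_zero]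
      exact div_nonneg (fAux_nonneg q) (by norm_num)

/-- The pair singular series has average value 1: Σ_{d ≤ h} 𝔖(d) ~ h as h → ∞. -/
theorem pairSingularSeries_average :
    Filter.Tendsto (fun h : ℕ => (∑ d ∈ Finset.Icc 1 h, pairSingularSeries d) / h)
      Filter.atTop (nhds 1) := by
  have hB : (0:ℝ) < Bsum := lt_of_lt_of_le one_pos one_le_Bsum
  have heq : ∀ h : ℕ, (∑ d ∈ Finset.Icc 1 h, pairSingularSeries d) / h =
      2 * twinPrimeConst * ∑' q : ℕ, gAux q * ((h / (2 * q) : ℕ) : ℝ) / h := by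
    intro h
    rw [key2, key3, mul_div_assoc, ← tsum_div_const]
  simp only [heq]
  have h1 : (1 : ℝ) = 2 * twinPrimeConst * (Bsum / 2) := by
    rw [twinPrimeConst_eq]
    field_simp
  rw [h1]
  exact main_tendsto.const_mul _
end
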